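/- For every natural number n and real x, |x|ⁿ ≤ √(n!) · cⁿ · e^{x²/(2c²)} for any c > 0. In particular, ∫ℝ |x|ⁿ p(x) e^{-x²/c²} dx ≤ √(n!) · cⁿ · ∫ℝ |p(x)| e^{-x²/(2c²)} dx for any polynomial p. -/

import Mathlib

open MeasureTheory

lemma key_ptwise (n : ℕ) {c : ℝ} (hc : 0 < c) (x : ℝ) :
    |x| ^ n ≤ Real.sqrt (Nat.factorial n : ℝ) * c ^ n * Real.exp (x ^ 2 / (2 * c ^ 2)) := by
  have hc2 : (0:ℝ) < c ^ 2 := by positivity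
  have h1 : (x ^ 2 / c ^ 2) ^ n / (Nat.factorial n : ℝ) ≤ Real.exp (x ^ 2 / c ^ 2) :=
    Real.pow_div_factorial_le_exp _ (by positivity) n
  have hfac : (0:ℝ) < (Nat.factorial n : ℝ) := by exact_mod_cast n.factorial_pos
  have h2 : (x ^ 2) ^ n ≤ (Nat.factorial n : ℝ) * (c ^ 2) ^ n * Real.exp (x ^ 2 / c ^ 2) := by
    rw [div_pow, div_div] at h1
    have := (div_le_iff₀ (by positivity)).mp h1
    nlinarith [this]
  have habs : |x| ^ n = Real.sqrt ((x ^ 2) ^ n) := by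
    rw [show (x ^ 2) ^ n = (|x| ^ n) ^ 2 by rw [← sq_abs]; ring,
      Real.sqrt_sq (by positivity)]
  have hrhs : Real.sqrt ((Nat.factorial n : ℝ) * (c ^ 2) ^ n * Real.exp (x ^ 2 / c ^ 2)) =
      Real.sqrt (Nat.factorial n : ℝ) * c ^ n * Real.exp (x ^ 2 / (2 * c ^ 2)) := by
    rw [show (Nat.factorial n : ℝ) * (c ^ 2) ^ n * Real.exp (x ^ 2 / c ^ 2)
        = (Real.sqrt (Nat.factorial n : ℝ) * c ^ n * Real.exp (x ^ 2 / (2 * c ^ 2))) ^ 2 by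
      have he : x ^ 2 / (2 * c ^ 2) + x ^ 2 / (2 * c ^ 2) = x ^ 2 / c ^ 2 := by
        field_simp; ring
      rw [mul_pow, mul_pow, Real.sq_sqrt hfac.le, sq (Real.exp _), ← Real.exp_add, he]
      ring,
      Real.sqrt_sq (by positivity)]
  rw [habs, ← hrhs]
  exact Real.sqrt_le_sqrt h2

lemma int_pow_gauss {b : ℝ} (hb : 0 < b) (k : ℕ) :
    Integrable (fun x : ℝ => x ^ k * Real.exp (-b * x ^ 2)) := by
  have hsb : 0 < Real.sqrt b := Real.sqrt_pos.mpr hb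
  set c0 : ℝ := (Real.sqrt b)⁻¹ with hc0
  have hc0p : 0 < c0 := by positivity
  have hc0sq : c0 ^ 2 = b⁻¹ := by
    rw [hc0, ← Real.sqrt_inv, Real.sq_sqrt (by positivity)]
  set K : ℝ := Real.sqrt (Nat.factorial k : ℝ) * c0 ^ k with hK
  refine Integrable.mono' ((integrable_exp_neg_mul_sq (half_pos hb)).const_mul K)
    ?_ (Filter.Eventually.of_forall fun x => ?_)
  · exact ((continuous_pow k).mul
      (Real.continuous_exp.comp (by continuity))).aestronglyMeasurable
  · have h1 := key_ptwise k hc0p x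
    have he : x ^ 2 / (2 * c0 ^ 2) = b * x ^ 2 / 2 := by
      rw [hc0sq]; field_simp
    rw [he] at h1
    have hxk : |x| ^ k = ‖x ^ k‖ := by rw [← abs_pow]; rfl
    have : ‖x ^ k * Real.exp (-b * x ^ 2)‖ = |x| ^ k * Real.exp (-b * x ^ 2) := by
      rw [norm_mul, ← abs_pow]
      simp [abs_of_pos (Real.exp_pos _)]
    rw [this]
    calc |x| ^ k * Real.exp (-b * x ^ 2)
        ≤ K * Real.exp (b * x ^ 2 / 2) * Real.exp (-b * x ^ 2) := by
          exact mul_le_mul_of_nonneg_right h1 (Real.exp_pos _).le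
      _ = K * Real.exp (-(b / 2) * x ^ 2) := by
          rw [mul_assoc, ← Real.exp_add]; congr 2; ring

lemma int_poly_gauss {b : ℝ} (hb : 0 < b) (p : Polynomial ℝ) :
    Integrable (fun x : ℝ => p.eval x * Real.exp (-b * x ^ 2)) := by
  induction p using Polynomial.induction_on' with
  | monomial k a =>
      simpa [Polynomial.eval_monomial, mul_assoc] using ((int_pow_gauss hb k).const_mul a)
  | add p q hp hq =>
      simpa [add_mul, Pi.add_def] using hp.add hq

lemma int_poly_gauss' {d : ℝ} (hd : 0 < d) (p : Polynomial ℝ) :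
    Integrable (fun x : ℝ => p.eval x * Real.exp (-x ^ 2 / d)) := by
  have := int_poly_gauss (b := 1 / d) (by positivity) p
  simpa only [show ∀ x : ℝ, -x ^ 2 / d = -(1 / d) * x ^ 2 from fun x => by ring] using this

/-- For every `n : ℕ` and `c > 0`, `|x|^n ≤ √(n!) · cⁿ · exp (x²/(2c²))`
for all real `x`; in particular, for any polynomial `p`,
`∫ |x|ⁿ p(x) e^{-x²/c²} dx ≤ √(n!) · cⁿ · ∫ |p(x)| e^{-x²/(2c²)} dx`. -/
theorem abs_pow_le_sqrt_factorial_mul_exp (n : ℕ) (c : ℝ) (hc : 0 < c) :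
    (∀ x : ℝ, |x| ^ n ≤ Real.sqrt (Nat.factorial n : ℝ) * c ^ n * Real.exp (x ^ 2 / (2 * c ^ 2))) ∧
    (∀ p : Polynomial ℝ,
      (∫ x : ℝ, |x| ^ n * p.eval x * Real.exp (-x ^ 2 / c ^ 2)) ≤
        Real.sqrt (Nat.factorial n : ℝ) * c ^ n *
          ∫ x : ℝ, |p.eval x| * Real.exp (-x ^ 2 / (2 * c ^ 2))) := by
  refine ⟨fun x => key_ptwise n hc x, fun p => ?_⟩
  have hc2 : (0:ℝ) < c ^ 2 := by positivity
  have h2c2 : (0:ℝ) < 2 * c ^ 2 := by positivity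
  set K : ℝ := Real.sqrt (Nat.factorial n : ℝ) * c ^ n with hK
  have hK0 : 0 ≤ K := by positivity
  have hgint : Integrable (fun x : ℝ => |p.eval x| * Real.exp (-x ^ 2 / (2 * c ^ 2))) := by
    have := (int_poly_gauss' h2c2 p).abs
    simpa [abs_mul, abs_of_pos (Real.exp_pos _)] using this
  set q : Polynomial ℝ := (1 + Polynomial.X ^ 2) ^ n * p with hq
  have hqev : ∀ x : ℝ, q.eval x = (1 + x ^ 2) ^ n * p.eval x := by
    intro x; simp [hq]
  have hq0int : Integrable (fun x : ℝ => |q.eval x| * Real.exp (-x ^ 2 / c ^ 2)) := by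
    have := (int_poly_gauss' hc2 q).abs
    simpa [abs_mul, abs_of_pos (Real.exp_pos _)] using this
  have hfint : Integrable (fun x : ℝ => |x| ^ n * p.eval x * Real.exp (-x ^ 2 / c ^ 2)) := by
    refine Integrable.mono' hq0int ?_ (Filter.Eventually.of_forall fun x => ?_)
    · exact (((continuous_abs.pow n).mul p.continuous).mul
        (Real.continuous_exp.comp (by continuity))).aestronglyMeasurable
    · have hle : |x| ^ n ≤ (1 + x ^ 2) ^ n :=
        pow_le_pow_left₀ (abs_nonneg x) (by nlinarith [sq_abs x, sq_nonneg (|x| - 1)]) n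
      have : ‖|x| ^ n * p.eval x * Real.exp (-x ^ 2 / c ^ 2)‖
          = |x| ^ n * |p.eval x| * Real.exp (-x ^ 2 / c ^ 2) := by
        rw [norm_mul, norm_mul]
        simp [abs_pow, abs_of_pos (Real.exp_pos _)]
      rw [this, hqev, abs_mul, abs_of_nonneg (by positivity : (0:ℝ) ≤ (1 + x ^ 2) ^ n)]
      have hrhs : (0:ℝ) ≤ Real.exp (-x ^ 2 / c ^ 2) := (Real.exp_pos _).le
      exact mul_le_mul_of_nonneg_right
        (mul_le_mul_of_nonneg_right hle (abs_nonneg _)) hrhs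
  have hexp : ∀ x : ℝ, Real.exp (x ^ 2 / (2 * c ^ 2)) * Real.exp (-x ^ 2 / c ^ 2)
      = Real.exp (-x ^ 2 / (2 * c ^ 2)) := by
    intro x
    rw [← Real.exp_add]; congr 1; field_simp; ring
  have hpt : ∀ x : ℝ, |x| ^ n * p.eval x * Real.exp (-x ^ 2 / c ^ 2)
      ≤ K * (|p.eval x| * Real.exp (-x ^ 2 / (2 * c ^ 2))) := by
    intro x
    calc |x| ^ n * p.eval x * Real.exp (-x ^ 2 / c ^ 2)
        ≤ |x| ^ n * |p.eval x| * Real.exp (-x ^ 2 / c ^ 2) :=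
          mul_le_mul_of_nonneg_right
            (mul_le_mul_of_nonneg_left (le_abs_self _) (by positivity)) (Real.exp_pos _).le
      _ ≤ K * Real.exp (x ^ 2 / (2 * c ^ 2)) * |p.eval x| * Real.exp (-x ^ 2 / c ^ 2) :=
          mul_le_mul_of_nonneg_right
            (mul_le_mul_of_nonneg_right (key_ptwise n hc x) (abs_nonneg _)) (Real.exp_pos _).le
      _ = K * (|p.eval x| * Real.exp (-x ^ 2 / (2 * c ^ 2))) := by
          rw [← hexp x]; ring
  have hmono := integral_mono hfint (hgint.const_mul K) hpt
  rwa [MeasureTheory.integral_const_mul] at hmono
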